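/- Let A, B, f be continuous with A bounded, and let c : ℤ → ℂ^q satisfy c(n+1) = H(n)c(n) + h(n) for all n ∈ ℤ, where H(n) = Z_n(t_{n+1}) and h(n) = ∫_{t_n}^{t_{n+1}} X(t_{n+1}, u) f(u) du. Define y : ℝ → ℂ^q by y(t) = Z_n(t) c(n) + ∫_{t_n}^{t} X(t,u) f(u) du for t ∈ [t_n, t_{n+1}). Then y is continuous on ℝ, y(t_n) = c(n) for all n ∈ ℤ, and y is a solution of the DEPCAG y'(t) = A(t)y(t) + B(t)y(γ⁰(t)) + f(t). -/

import Mathlib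

open scoped Matrix
open MeasureTheory Filter

attribute [local instance] Matrix.frobeniusSeminormedAddCommGroup
  Matrix.frobeniusNormedAddCommGroup Matrix.frobeniusNormedSpace
  Matrix.frobeniusNormedRing Matrix.frobeniusNormedAlgebra Matrix.frobeniusIsBoundedSMul

noncomputable section

abbrev Mat (q : ℕ) := Matrix (Fin q) (Fin q) ℂ
abbrev Vec (q : ℕ) := EuclideanSpace ℂ (Fin q)

/-- Action of a `q × q` complex matrix on `ℂ^q` with the Euclidean norm. -/
def aMul {q : ℕ} (M : Mat q) (v : Vec q) : Vec q := Matrix.toEuclideanLin M v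

/-- `X(t,s) = X(t) X(s)⁻¹`. -/
def XX {q : ℕ} (X : ℝ → Mat q) (t s : ℝ) : Mat q := X t * (X s)⁻¹

/-- `𝒥_n(t) = I + ∫_{t_n}^t X(t_n,u) B(u) du`. -/
def Jmat {q : ℕ} (X B : ℝ → Mat q) (ts : ℤ → ℝ) (n : ℤ) (r : ℝ) : Mat q :=
  1 + ∫ u in (ts n)..r, XX X (ts n) u * B u

/-- `Z_n(t) = X(t,t_n) 𝒥_n(t)`. -/
def Zmat {q : ℕ} (X B : ℝ → Mat q) (ts : ℤ → ℝ) (n : ℤ) (r : ℝ) : Mat q :=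
  XX X r (ts n) * Jmat X B ts n r


lemma aMul_apply {q : ℕ} (M : Mat q) (v : Vec q) :
    aMul M v = Matrix.toEuclideanCLM (𝕜 := ℂ) M v := rfl

lemma aMul_mul {q : ℕ} (M N : Mat q) (v : Vec q) : aMul (M * N) v = aMul M (aMul N v) := by
  simp only [aMul_apply, map_mul, ContinuousLinearMap.mul_apply]

lemma aMul_one {q : ℕ} (v : Vec q) : aMul 1 v = v := by
  simp only [aMul_apply, map_one, ContinuousLinearMap.one_apply]

lemma aMul_add {q : ℕ} (M : Mat q) (u v : Vec q) : aMul M (u + v) = aMul M u + aMul M v :=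
  map_add _ _ _

/-- `aMul` as a continuous ℝ-linear map in the matrix argument. -/
def TmatL (q : ℕ) : Mat q →L[ℝ] (Vec q →L[ℝ] Vec q) :=
  LinearMap.toContinuousLinearMap
  { toFun := fun M => (Matrix.toEuclideanCLM (𝕜 := ℂ) M).restrictScalars ℝ
    map_add' := fun M N => by ext v; simp [map_add]
    map_smul' := fun r M => by
      refine ContinuousLinearMap.ext fun v => ?_
      simp only [ContinuousLinearMap.coe_restrictScalars', RingHom.id_apply,
        ContinuousLinearMap.coe_smul', Pi.smul_apply]
      rw [← algebraMap_smul ℂ r M, _root_.map_smul, ContinuousLinearMap.smul_apply,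
        algebraMap_smul] }

lemma TmatL_apply {q : ℕ} (M : Mat q) (v : Vec q) : TmatL q M v = aMul M v := rfl

lemma cont_matrix_inv {q : ℕ} {X : ℝ → Mat q} (hXc : Continuous X)
    (hXinv : ∀ t, IsUnit (X t)) : Continuous fun u => (X u)⁻¹ := by
  have hdet : ∀ u, (X u).det ≠ 0 := fun u =>
    ((Matrix.isUnit_iff_isUnit_det _).mp (hXinv u)).ne_zero
  have h : (fun u => (X u)⁻¹) = fun u => ((X u).det)⁻¹ • (X u).adjugate := by
    funext u
    rw [Matrix.inv_def, Ring.inverse_eq_inv']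
  rw [h]
  exact (hXc.matrix_det.inv₀ hdet).smul hXc.matrix_adjugate

/-- `G_n(r)`: the "reduced" variation-of-constants expression with `X(r)` factored out. -/
def Gfun {q : ℕ} (X B : ℝ → Mat q) (ts : ℤ → ℝ) (c : ℤ → Vec q) (f : ℝ → Vec q)
    (n : ℤ) (r : ℝ) : Vec q :=
  aMul ((X (ts n))⁻¹) (aMul (Jmat X B ts n r) (c n)) +
    ∫ u in (ts n)..r, aMul ((X u)⁻¹) (f u)

/-- `F_n(r)`: the variation-of-constants expression on the `n`-th interval. -/
def Ffun {q : ℕ} (X B : ℝ → Mat q) (ts : ℤ → ℝ) (c : ℤ → Vec q) (f : ℝ → Vec q)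
    (n : ℤ) (r : ℝ) : Vec q :=
  aMul (Zmat X B ts n r) (c n) + ∫ u in (ts n)..r, aMul (XX X r u) (f u)


open scoped Topology

/-- the function built from a solution `c` of the difference equation
`c(n+1) = H(n) c(n) + h(n)` by the variation-of-constants formula on each `[t_n, t_{n+1})`
is continuous, interpolates `c` at the nodes `t_n`, and solves the DEPCAG
`y' = A(t) y + B(t) y(γ⁰(t)) + f(t)`. -/
theorem depcag_solution_from_difference_solution {q : ℕ} (hq : 1 ≤ q)
    (ts : ℤ → ℝ) (hts : StrictMono ts)
    (htop : Tendsto ts atTop atTop) (hbot : Tendsto ts atBot atBot)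
    (A B : ℝ → Mat q) (hAcont : Continuous A) (hBcont : Continuous B)
    (hAbdd : ∃ C : ℝ, ∀ t : ℝ, ‖A t‖ ≤ C)
    (f : ℝ → Vec q) (hfcont : Continuous f)
    (X : ℝ → Mat q) (hX : ∀ t : ℝ, HasDerivAt X (A t * X t) t)
    (hXinv : ∀ t : ℝ, IsUnit (X t))
    (c : ℤ → Vec q)
    (hc : ∀ n : ℤ, c (n + 1) = aMul (Zmat X B ts n (ts (n + 1))) (c n) +
      ∫ u in (ts n)..(ts (n + 1)), aMul (XX X (ts (n + 1)) u) (f u))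
    (y : ℝ → Vec q)
    (hy : ∀ n : ℤ, ∀ r ∈ Set.Ico (ts n) (ts (n + 1)),
      y r = aMul (Zmat X B ts n r) (c n) + ∫ u in (ts n)..r, aMul (XX X r u) (f u)) :
    Continuous y ∧ (∀ n : ℤ, y (ts n) = c n) ∧
      ∀ n : ℤ, ∀ r ∈ Set.Ioo (ts n) (ts (n + 1)),
        HasDerivAt y (aMul (A r) (y r) + aMul (B r) (y (ts n)) + f r) r := by
  have hXc : Continuous X := continuous_iff_continuousAt.mpr fun t => (hX t).continuousAt
  have hXic : Continuous fun u => (X u)⁻¹ := cont_matrix_inv hXc hXinv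
  have hdetu : ∀ u, IsUnit (X u).det := fun u => (Matrix.isUnit_iff_isUnit_det _).mp (hXinv u)
  have hgB : ∀ n : ℤ, Continuous fun u => XX X (ts n) u * B u := fun n => by
    unfold XX; exact (continuous_const.mul hXic).mul hBcont
  have hgf : Continuous fun u => aMul ((X u)⁻¹) (f u) :=
    ((TmatL q).continuous.comp hXic).clm_apply hfcont
  have hJcont : ∀ n, Continuous (Jmat X B ts n) := fun n =>
    continuous_const.add (intervalIntegral.continuous_primitive
      (fun a b => (hgB n).intervalIntegrable a b) (ts n))
  have hGcont : ∀ n, Continuous (Gfun X B ts c f n) := fun n => by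
    unfold Gfun
    refine Continuous.add ?_ (intervalIntegral.continuous_primitive
      (fun a b => hgf.intervalIntegrable a b) (ts n))
    exact ((Matrix.toEuclideanCLM (𝕜 := ℂ) ((X (ts n))⁻¹)).restrictScalars ℝ).continuous.comp
      (((TmatL q).continuous.comp (hJcont n)).clm_apply continuous_const)
  -- key factorization F_n(r) = X(r) ⬝ G_n(r)
  have hFG : ∀ n r, Ffun X B ts c f n r = aMul (X r) (Gfun X B ts c f n r) := by
    intro n r
    have h2 : (∫ u in (ts n)..r, aMul (X r * (X u)⁻¹) (f u))
        = aMul (X r) (∫ u in (ts n)..r, aMul ((X u)⁻¹) (f u)) := by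
      rw [aMul_apply, ← (Matrix.toEuclideanCLM (𝕜 := ℂ) (X r)).intervalIntegral_comp_comm
        (hgf.intervalIntegrable _ _)]
      simp only [← aMul_apply, ← aMul_mul]
    unfold Ffun Gfun Zmat XX
    rw [aMul_add, mul_assoc, aMul_mul, aMul_mul, h2]
  -- derivative of Jmat
  have hJder : ∀ n r, HasDerivAt (Jmat X B ts n) (XX X (ts n) r * B r) r := fun n r => by
    unfold Jmat
    exact ((hgB n).integral_hasStrictDerivAt (ts n) r).hasDerivAt.const_add 1
  -- derivative of Gfun
  have hGder : ∀ n r, HasDerivAt (Gfun X B ts c f n)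
      (aMul ((X (ts n))⁻¹) (aMul (XX X (ts n) r * B r) (c n)) + aMul ((X r)⁻¹) (f r)) r := by
    intro n r
    have h1 : HasDerivAt (fun s => aMul ((X (ts n))⁻¹) (aMul (Jmat X B ts n s) (c n)))
        (aMul ((X (ts n))⁻¹) (aMul (XX X (ts n) r * B r) (c n))) r := by
      set L := ((Matrix.toEuclideanCLM (𝕜 := ℂ) ((X (ts n))⁻¹)).restrictScalars ℝ).comp
        ((TmatL q).flip (c n)) with hL
      have := L.hasFDerivAt.comp_hasDerivAt r (hJder n r)
      convert this using 2 <;> rfl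
    have h2 : HasDerivAt (fun s => ∫ u in (ts n)..s, aMul ((X u)⁻¹) (f u))
        (aMul ((X r)⁻¹) (f r)) r :=
      intervalIntegral.integral_hasDerivAt_right (hgf.intervalIntegrable _ _)
        (hgf.stronglyMeasurableAtFilter _ _) hgf.continuousAt
    exact h1.add h2
  -- derivative of Ffun
  have hXTder : ∀ r, HasDerivAt (fun s => TmatL q (X s)) (TmatL q (A r * X r)) r := fun r =>
    (TmatL q).hasFDerivAt.comp_hasDerivAt r (hX r)
  have hFder : ∀ n r, HasDerivAt (Ffun X B ts c f n)
      (aMul (A r) (Ffun X B ts c f n r) + (aMul (B r) (c n) + f r)) r := by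
    intro n r
    have h := (hXTder r).clm_apply (hGder n r)
    have hfun : (fun s => TmatL q (X s) (Gfun X B ts c f n s)) = Ffun X B ts c f n :=
      funext fun s => (hFG n s).symm
    rw [hfun] at h
    have e1 : TmatL q (A r * X r) (Gfun X B ts c f n r)
        = aMul (A r) (Ffun X B ts c f n r) := by
      rw [TmatL_apply, aMul_mul, hFG]
    have e2 : TmatL q (X r)
        (aMul ((X (ts n))⁻¹) (aMul (XX X (ts n) r * B r) (c n)) + aMul ((X r)⁻¹) (f r))
        = aMul (B r) (c n) + f r := by
      rw [TmatL_apply, aMul_add]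
      congr 1
      · have hmat : X r * (X (ts n))⁻¹ * (XX X (ts n) r * B r) = B r := by
          unfold XX
          simp only [mul_assoc]
          rw [← mul_assoc ((X (ts n))⁻¹) (X (ts n)), Matrix.nonsing_inv_mul _ (hdetu _), one_mul,
            ← mul_assoc, Matrix.mul_nonsing_inv _ (hdetu _), one_mul]
        rw [← aMul_mul, ← aMul_mul, hmat]
      · rw [← aMul_mul, Matrix.mul_nonsing_inv _ (hdetu _), aMul_one]
    rw [e1, e2] at h
    exact h
  have hts1 : ∀ n : ℤ, ts n < ts (n + 1) := fun n => hts (by omega)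
  -- interpolation
  have hyn : ∀ n : ℤ, y (ts n) = c n := by
    intro n
    rw [hy n (ts n) ⟨le_refl _, hts1 n⟩]
    unfold Zmat Jmat XX
    rw [intervalIntegral.integral_same, intervalIntegral.integral_same, add_zero, add_zero,
      mul_one, Matrix.mul_nonsing_inv _ (hdetu _), aMul_one]
  have hyF : ∀ n : ℤ, ∀ r ∈ Set.Icc (ts n) (ts (n + 1)), y r = Ffun X B ts c f n r := by
    intro n r hr
    rcases lt_or_eq_of_le hr.2 with h | h
    · exact hy n r ⟨hr.1, h⟩
    · rw [h, hyn (n + 1)]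
      unfold Ffun
      exact hc n
  have hFcont : ∀ n, Continuous (Ffun X B ts c f n) := fun n => by
    have h : Ffun X B ts c f n = fun r => TmatL q (X r) (Gfun X B ts c f n r) :=
      funext fun r => hFG n r
    rw [h]
    exact ((TmatL q).continuous.comp hXc).clm_apply (hGcont n)
  have hexn : ∀ t : ℝ, ∃ n : ℤ, ts n ≤ t ∧ t < ts (n + 1) := by
    intro t
    obtain ⟨N, hN⟩ := (htop.eventually_gt_atTop t).exists
    obtain ⟨M, hM⟩ := (hbot.eventually (eventually_le_atBot t)).exists
    have hbd : ∃ b : ℤ, ∀ z : ℤ, t < ts z → b ≤ z := by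
      refine ⟨M, fun z hz => ?_⟩
      by_contra hzM
      push_neg at hzM
      exact absurd ((hts.monotone (le_of_lt hzM)).trans hM) (not_le.mpr hz)
    obtain ⟨m, hm1, hm2⟩ := Int.exists_least_of_bdd hbd ⟨N, hN⟩
    refine ⟨m - 1, ?_, ?_⟩
    · by_contra hc'
      push_neg at hc'
      have := hm2 (m - 1) hc'
      omega
    · rw [sub_add_cancel]; exact hm1
  have hycont : Continuous y := by
    rw [continuous_iff_continuousAt]
    intro t
    obtain ⟨n, h1, h2⟩ := hexn t
    rcases eq_or_lt_of_le h1 with heq | hlt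
    · rw [continuousAt_iff_continuous_left_right]
      constructor
      · obtain ⟨m, hm⟩ : ∃ m : ℤ, n = m + 1 := ⟨n - 1, by omega⟩
        subst hm
        have hlt' : ts m < t := heq ▸ hts (by omega)
        have hmem : Set.Ioi (ts m) ∈ 𝓝[Set.Iic t] t :=
          mem_nhdsWithin_of_mem_nhds (Ioi_mem_nhds hlt')
        refine ((hFcont m).continuousAt.continuousWithinAt).congr_of_eventuallyEq ?_ ?_
        · filter_upwards [hmem, self_mem_nhdsWithin] with s hs1 hs2
          exact hyF m s ⟨le_of_lt hs1, hs2.trans (le_of_eq heq.symm)⟩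
        · exact hyF m t ⟨le_of_lt hlt', le_of_eq heq.symm⟩
      · have hmem : Set.Iio (ts (n + 1)) ∈ 𝓝[Set.Ici t] t :=
          mem_nhdsWithin_of_mem_nhds (Iio_mem_nhds h2)
        refine ((hFcont n).continuousAt.continuousWithinAt).congr_of_eventuallyEq ?_ ?_
        · filter_upwards [hmem, self_mem_nhdsWithin] with s hs1 hs2
          exact hyF n s ⟨heq ▸ hs2, le_of_lt hs1⟩
        · exact hyF n t ⟨h1, le_of_lt h2⟩
    · exact ((hFcont n).continuousAt).congr
        (Filter.eventuallyEq_of_mem (Ioo_mem_nhds hlt h2)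
          fun s hs => (hyF n s ⟨le_of_lt hs.1, le_of_lt hs.2⟩).symm)
  refine ⟨hycont, hyn, ?_⟩
  intro n r hr
  have heq : y =ᶠ[𝓝 r] Ffun X B ts c f n :=
    Filter.eventuallyEq_of_mem (Ioo_mem_nhds hr.1 hr.2)
      fun s hs => hyF n s ⟨le_of_lt hs.1, le_of_lt hs.2⟩
  have h := (hFder n r).congr_of_eventuallyEq heq
  rw [hyn n, hyF n r ⟨le_of_lt hr.1, le_of_lt hr.2⟩, add_assoc]
  exact h
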